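/- Let G be a group satisfying the 5-Engel identity [x,y,y,y,y,y] = 1 for all x, y ∈ G. Then for all x, y, z ∈ G the left-normed commutator [x,z,y,z,z,z,z] lies in γ_8(G), the eighth term of the lower central series of G. -/

import Mathlib

/-- The commutator `[a,b] = a⁻¹ b⁻¹ a b`. -/
def gc {G : Type*} [Group G] (a b : G) : G := a⁻¹ * b⁻¹ * a * b

section Aux

variable {G : Type*} [Group G]

open Subgroup

open scoped commutatorElement

/-- Three subgroups lemma, relative version: if two of the rotated triple commutators
lie in a normal subgroup `N`, then so does the third. -/
theorem commutator_commutator_le_of_rotate {H₁ H₂ H₃ N : Subgroup G} [N.Normal]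
    (h1 : ⁅⁅H₂, H₃⁆, H₁⁆ ≤ N) (h2 : ⁅⁅H₃, H₁⁆, H₂⁆ ≤ N) : ⁅⁅H₁, H₂⁆, H₃⁆ ≤ N := by
  let π := QuotientGroup.mk' N
  have hker : π.ker = N := QuotientGroup.ker_mk' N
  have hmapN : ∀ (H : Subgroup G), H ≤ N → Subgroup.map π H = ⊥ := by
    intro H hH
    rw [eq_bot_iff]
    refine (Subgroup.map_le_iff_le_comap).2 ?_
    intro g hg
    have : g ∈ N := hH hg
    simp only [Subgroup.mem_comap, Subgroup.mem_bot]
    rwa [← QuotientGroup.ker_mk' N, MonoidHom.mem_ker] at this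
  have key : ⁅⁅Subgroup.map π H₁, Subgroup.map π H₂⁆, Subgroup.map π H₃⁆ = ⊥ := by
    apply Subgroup.commutator_commutator_eq_bot_of_rotate
    · rw [← Subgroup.map_commutator, ← Subgroup.map_commutator]
      exact hmapN _ h1
    · rw [← Subgroup.map_commutator, ← Subgroup.map_commutator]
      exact hmapN _ h2
  rw [← Subgroup.map_commutator, ← Subgroup.map_commutator] at key
  intro g hg
  have : π g ∈ (⊥ : Subgroup (G ⧸ N)) := by
    rw [← key]
    exact Subgroup.mem_map_of_mem π hg
  rw [Subgroup.mem_bot] at this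
  rw [← hker, MonoidHom.mem_ker]
  exact this


theorem lcs_succ_eq (n : ℕ) :
    Subgroup.lowerCentralSeries (⊤ : Subgroup G) (n + 1) = ⁅Subgroup.lowerCentralSeries (⊤ : Subgroup G) n, (⊤ : Subgroup G)⁆ := rfl

/-- `⁅γ_{i}, γ_{j}⁆ ≤ γ_{i+j+1}` for the (0-indexed) lower central series. -/
theorem commutator_lcs_le (j : ℕ) : ∀ i : ℕ,
    ⁅Subgroup.lowerCentralSeries (⊤ : Subgroup G) i, Subgroup.lowerCentralSeries (⊤ : Subgroup G) j⁆ ≤ Subgroup.lowerCentralSeries (⊤ : Subgroup G) (i + j + 1) := by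
  induction j with
  | zero =>
    intro i
    exact le_of_eq (lcs_succ_eq i).symm
  | succ j ih =>
    intro i
    have hcomm : ⁅Subgroup.lowerCentralSeries (⊤ : Subgroup G) i, Subgroup.lowerCentralSeries (⊤ : Subgroup G) (j + 1)⁆ =
        ⁅Subgroup.lowerCentralSeries (⊤ : Subgroup G) (j + 1), Subgroup.lowerCentralSeries (⊤ : Subgroup G) i⁆ := Subgroup.commutator_comm _ _
    rw [hcomm, lcs_succ_eq j]
    apply commutator_commutator_le_of_rotate (N := Subgroup.lowerCentralSeries (⊤ : Subgroup G) (i + (j + 1) + 1))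
    · -- ⁅⁅⊤, γ_i⁆, γ_j⁆ ≤ γ_{i+j+2}
      have h1 : ⁅(⊤ : Subgroup G), Subgroup.lowerCentralSeries (⊤ : Subgroup G) i⁆ = Subgroup.lowerCentralSeries (⊤ : Subgroup G) (i + 1) := by
        rw [Subgroup.commutator_comm, ← lcs_succ_eq i]
      rw [h1]
      have := ih (i + 1)
      have harith : (i + 1) + j + 1 = i + (j + 1) + 1 := by omega
      rwa [harith] at this
    · -- ⁅⁅γ_i, γ_j⁆, ⊤⁆ ≤ γ_{i+j+2}
      calc ⁅⁅Subgroup.lowerCentralSeries (⊤ : Subgroup G) i, Subgroup.lowerCentralSeries (⊤ : Subgroup G) j⁆, (⊤ : Subgroup G)⁆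
          ≤ ⁅Subgroup.lowerCentralSeries (⊤ : Subgroup G) (i + j + 1), (⊤ : Subgroup G)⁆ :=
            Subgroup.commutator_mono (ih i) le_rfl
        _ = Subgroup.lowerCentralSeries (⊤ : Subgroup G) (i + j + 1 + 1) := (lcs_succ_eq _).symm
        _ ≤ Subgroup.lowerCentralSeries (⊤ : Subgroup G) (i + (j + 1) + 1) := by
            apply Subgroup.lowerCentralSeries_antitone
            omega

theorem gc_eq_commutatorElement (a b : G) : gc a b = ⁅a⁻¹, b⁻¹⁆ := by
  simp [gc, commutatorElement_def]

/-- membership of `gc a b` from memberships in the lower central series -/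
theorem gc_mem_lcs {i j : ℕ} {a b : G} (ha : a ∈ Subgroup.lowerCentralSeries (⊤ : Subgroup G) i)
    (hb : b ∈ Subgroup.lowerCentralSeries (⊤ : Subgroup G) j) : gc a b ∈ Subgroup.lowerCentralSeries (⊤ : Subgroup G) (i + j + 1) := by
  rw [gc_eq_commutatorElement]
  exact commutator_lcs_le j i (Subgroup.commutator_mem_commutator (inv_mem ha) (inv_mem hb))

theorem gc_mem_lcs_succ {i : ℕ} {a : G} (ha : a ∈ Subgroup.lowerCentralSeries (⊤ : Subgroup G) i) (b : G) :
    gc a b ∈ Subgroup.lowerCentralSeries (⊤ : Subgroup G) (i + 1) :=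
  gc_mem_lcs (j := 0) ha (Subgroup.mem_top b)

theorem lcs_mono {i j : ℕ} (h : j ≤ i) {a : G} (ha : a ∈ Subgroup.lowerCentralSeries (⊤ : Subgroup G) i) :
    a ∈ Subgroup.lowerCentralSeries (⊤ : Subgroup G) j :=
  Subgroup.lowerCentralSeries_antitone _ h ha

/-- exact expansion of `gc (a*d*b*e) z` -/
theorem gc_expand (a d b e z : G) :
    gc (a * d * b * e) z =
      gc a z * gc (gc a z) (d * b * e) * (gc d z * gc (gc d z) (b * e) *
        (gc b z * gc (gc b z) e * gc e z)) := by
  simp only [gc]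
  group

/-- pure reordering identity -/
theorem reorder_eq (A D B j₁ j₂ j₃ j₄ : G) :
    A * j₁ * (D * j₂ * (B * j₃ * j₄)) =
      A * D * B * ((D * B)⁻¹ * j₁ * (D * B) * (B⁻¹ * j₂ * B) * j₃ * j₄) := by
  group

/-- The key inductive step: bracketing an `a·d·b·e` decomposition with `z`. -/
theorem step_lemma (k : ℕ) (a d b e z : G)
    (ha : a ∈ Subgroup.lowerCentralSeries (⊤ : Subgroup G) (k + 1))
    (hd : d ∈ Subgroup.lowerCentralSeries (⊤ : Subgroup G) (k + 2))
    (hb : b ∈ Subgroup.lowerCentralSeries (⊤ : Subgroup G) (k + 1))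
    (he : e ∈ Subgroup.lowerCentralSeries (⊤ : Subgroup G) (k + 3)) :
    ∃ e' ∈ Subgroup.lowerCentralSeries (⊤ : Subgroup G) (k + 4),
      gc (a * d * b * e) z = gc a z * gc d z * gc b z * e' := by
  set s := k + 1 with hs
  have hA : gc a z ∈ Subgroup.lowerCentralSeries (⊤ : Subgroup G) (s + 1) := gc_mem_lcs_succ ha z
  have hD : gc d z ∈ Subgroup.lowerCentralSeries (⊤ : Subgroup G) (s + 2) := gc_mem_lcs_succ hd z
  have hB : gc b z ∈ Subgroup.lowerCentralSeries (⊤ : Subgroup G) (s + 1) := gc_mem_lcs_succ hb z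
  have hdbe : d * b * e ∈ Subgroup.lowerCentralSeries (⊤ : Subgroup G) s :=
    mul_mem (mul_mem (lcs_mono (by omega) hd) hb) (lcs_mono (by omega) he)
  have hbe : b * e ∈ Subgroup.lowerCentralSeries (⊤ : Subgroup G) s :=
    mul_mem hb (lcs_mono (by omega) he)
  have hj₁ : gc (gc a z) (d * b * e) ∈ Subgroup.lowerCentralSeries (⊤ : Subgroup G) (s + 3) :=
    lcs_mono (by omega) (gc_mem_lcs hA hdbe)
  have hj₂ : gc (gc d z) (b * e) ∈ Subgroup.lowerCentralSeries (⊤ : Subgroup G) (s + 3) :=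
    lcs_mono (by omega) (gc_mem_lcs hD hbe)
  have hj₃ : gc (gc b z) e ∈ Subgroup.lowerCentralSeries (⊤ : Subgroup G) (s + 3) :=
    lcs_mono (by omega) (gc_mem_lcs hB he)
  have hj₄ : gc e z ∈ Subgroup.lowerCentralSeries (⊤ : Subgroup G) (s + 3) := gc_mem_lcs_succ he z
  set A := gc a z
  set D := gc d z
  set B := gc b z
  set j₁ := gc (gc a z) (d * b * e)
  set j₂ := gc (gc d z) (b * e)
  set j₃ := gc (gc b z) e
  set j₄ := gc e z
  refine ⟨(D * B)⁻¹ * j₁ * (D * B) * (B⁻¹ * j₂ * B) * j₃ * j₄, ?_, ?_⟩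
  · have hnormal : (Subgroup.lowerCentralSeries (⊤ : Subgroup G) (s + 3)).Normal := Subgroup.lowerCentralSeries_normal _ _
    have hc₁ : (D * B)⁻¹ * j₁ * (D * B) ∈ Subgroup.lowerCentralSeries (⊤ : Subgroup G) (s + 3) := by
      have := hnormal.conj_mem j₁ hj₁ (D * B)⁻¹
      simpa [mul_assoc] using this
    have hc₂ : B⁻¹ * j₂ * B ∈ Subgroup.lowerCentralSeries (⊤ : Subgroup G) (s + 3) := by
      have := hnormal.conj_mem j₂ hj₂ B⁻¹
      simpa [mul_assoc] using this
    exact mul_mem (mul_mem (mul_mem hc₁ hc₂) hj₃) hj₄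
  · rw [gc_expand a d b e z]
    exact reorder_eq A D B j₁ j₂ j₃ j₄

end Aux

/-- In a 5-Engel group `G`, the left-normed commutator `[x,z,y,z,z,z,z]` lies in `γ₈(G)`. -/
theorem fiveEngel_commutator_mem_gamma8
    (G : Type*) [Group G]
    (h5 : ∀ x y : G, gc (gc (gc (gc (gc x y) y) y) y) y = 1)
    (x y z : G) :
    gc (gc (gc (gc (gc (gc x z) y) z) z) z) z ∈ (⊤ : Subgroup G).lowerCentralSeries 7 := by
  -- Strategy: expand [xy, z, z, z, z, z] = [x,z⁵] · [x,z,y,z,z,z,z] · [y,z⁵] mod γ₈,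
  -- then use the three 5-Engel instances for (x,z), (y,z), (xy,z).
  -- notation
  set a₁ := gc x z with ha₁def
  set b₁ := gc y z with hb₁def
  set d₁ := gc (gc x z) y with hd₁def
  have hx0 : x ∈ Subgroup.lowerCentralSeries (⊤ : Subgroup G) 0 := Subgroup.mem_top x
  have hy0 : y ∈ Subgroup.lowerCentralSeries (⊤ : Subgroup G) 0 := Subgroup.mem_top y
  have ha₁ : a₁ ∈ Subgroup.lowerCentralSeries (⊤ : Subgroup G) 1 := gc_mem_lcs_succ hx0 z
  have hb₁ : b₁ ∈ Subgroup.lowerCentralSeries (⊤ : Subgroup G) 1 := gc_mem_lcs_succ hy0 z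
  have hd₁ : d₁ ∈ Subgroup.lowerCentralSeries (⊤ : Subgroup G) 2 := gc_mem_lcs_succ ha₁ y
  -- base expansion: gc (x*y) z = a₁ * d₁ * b₁ * 1
  have base : gc (x * y) z = a₁ * d₁ * b₁ * 1 := by
    simp only [ha₁def, hb₁def, hd₁def, gc, mul_one]
    group
  have he₁ : (1 : G) ∈ Subgroup.lowerCentralSeries (⊤ : Subgroup G) 3 := one_mem _
  -- step 1
  obtain ⟨e₂, he₂, hstep₁⟩ := step_lemma 0 a₁ d₁ b₁ 1 z ha₁ hd₁ hb₁ he₁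
  rw [← base] at hstep₁
  -- new components
  have ha₂ : gc a₁ z ∈ Subgroup.lowerCentralSeries (⊤ : Subgroup G) 2 := gc_mem_lcs_succ ha₁ z
  have hd₂ : gc d₁ z ∈ Subgroup.lowerCentralSeries (⊤ : Subgroup G) 3 := gc_mem_lcs_succ hd₁ z
  have hb₂ : gc b₁ z ∈ Subgroup.lowerCentralSeries (⊤ : Subgroup G) 2 := gc_mem_lcs_succ hb₁ z
  -- step 2
  obtain ⟨e₃, he₃, hstep₂⟩ := step_lemma 1 (gc a₁ z) (gc d₁ z) (gc b₁ z) e₂ z ha₂ hd₂ hb₂ he₂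
  rw [← hstep₁] at hstep₂
  have ha₃ : gc (gc a₁ z) z ∈ Subgroup.lowerCentralSeries (⊤ : Subgroup G) 3 := gc_mem_lcs_succ ha₂ z
  have hd₃ : gc (gc d₁ z) z ∈ Subgroup.lowerCentralSeries (⊤ : Subgroup G) 4 := gc_mem_lcs_succ hd₂ z
  have hb₃ : gc (gc b₁ z) z ∈ Subgroup.lowerCentralSeries (⊤ : Subgroup G) 3 := gc_mem_lcs_succ hb₂ z
  -- step 3
  obtain ⟨e₄, he₄, hstep₃⟩ :=
    step_lemma 2 (gc (gc a₁ z) z) (gc (gc d₁ z) z) (gc (gc b₁ z) z) e₃ z ha₃ hd₃ hb₃ he₃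
  rw [← hstep₂] at hstep₃
  have ha₄ : gc (gc (gc a₁ z) z) z ∈ Subgroup.lowerCentralSeries (⊤ : Subgroup G) 4 := gc_mem_lcs_succ ha₃ z
  have hd₄ : gc (gc (gc d₁ z) z) z ∈ Subgroup.lowerCentralSeries (⊤ : Subgroup G) 5 := gc_mem_lcs_succ hd₃ z
  have hb₄ : gc (gc (gc b₁ z) z) z ∈ Subgroup.lowerCentralSeries (⊤ : Subgroup G) 4 := gc_mem_lcs_succ hb₃ z
  -- step 4
  obtain ⟨e₅, he₅, hstep₄⟩ :=
    step_lemma 3 (gc (gc (gc a₁ z) z) z) (gc (gc (gc d₁ z) z) z) (gc (gc (gc b₁ z) z) z) e₄ z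
      ha₄ hd₄ hb₄ he₄
  rw [← hstep₃] at hstep₄
  -- Now hstep₄ :
  -- gc (gc (gc (gc (gc (x*y) z) z) z) z) z
  --   = gc⁴(a₁) z * gc⁴(d₁) z * gc⁴(b₁) z * e₅   with e₅ ∈ γ₈ = Subgroup.lowerCentralSeries (⊤ : Subgroup G) 7
  have hxy : gc (gc (gc (gc (gc (x * y) z) z) z) z) z = 1 := h5 (x * y) z
  have hxz : gc (gc (gc (gc a₁ z) z) z) z = 1 := by
    rw [ha₁def]; exact h5 x z
  have hyz : gc (gc (gc (gc b₁ z) z) z) z = 1 := by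
    rw [hb₁def]; exact h5 y z
  rw [hxy, hxz, hyz] at hstep₄
  -- 1 = 1 * D * 1 * e₅  where D is the target commutator
  have htarget : gc (gc (gc (gc d₁ z) z) z) z = e₅⁻¹ := by
    have h := hstep₄.symm
    rw [one_mul, mul_one] at h
    -- hstep₄ : 1 = D * e₅ hence
    calc gc (gc (gc (gc d₁ z) z) z) z
        = gc (gc (gc (gc d₁ z) z) z) z * e₅ * e₅⁻¹ := by group
      _ = 1 * e₅⁻¹ := by rw [← h]
      _ = e₅⁻¹ := one_mul _
  rw [hd₁def] at htarget
  rw [htarget]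
  exact inv_mem he₅
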